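/- Let 𝒰 ⊆ ℝ² be open, let r, Ω² : 𝒰 → (0,∞) be smooth, and suppose ∂_v( Ω^{−2} ∂_v r ) ≤ 0 on 𝒰 (as holds for any solution of the constraint equation ∂_v(Ω^{−2}∂_v r) = −4π r T_vv Ω^{−2} with T_vv ≥ 0). Let (ū,v̄) ∈ 𝒰 satisfy ∂_u r(ū,v̄) < 0 and 2m/r(ū,v̄) > 1. Then ∂_v r(ū,v̄) < 0, and for every v₁ ≥ v̄ with {ū} × [v̄,v₁] ⊆ 𝒰 one has Ω^{−2}∂_v r(ū,v) ≤ Ω^{−2}∂_v r(ū,v̄) < 0 for all v ∈ [v̄,v₁]; in particular r(ū,·) is strictly decreasing on [v̄,v₁], so r remains bounded above by r(ū,v̄) along the outgoing null ray {u = ū, v ≥ v̄}. -/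

import Mathlib

open Real MeasureTheory Filter Set Topology

noncomputable section

/-- Partial derivative of a function of two real variables in the first (`u`) variable. -/
def pdu (f : ℝ → ℝ → ℝ) (u v : ℝ) : ℝ := deriv (fun x => f x v) u

/-- Partial derivative of a function of two real variables in the second (`v`) variable. -/
def pdv (f : ℝ → ℝ → ℝ) (u v : ℝ) : ℝ := deriv (fun y => f u y) v

/-- The Hawking mass `m = (r/2)(1 + 4Ω⁻² ∂ᵤr ∂ᵥr)`. -/
def hawk (r Ω2 : ℝ → ℝ → ℝ) (u v : ℝ) : ℝ :=
  r u v / 2 * (1 + 4 * (Ω2 u v)⁻¹ * pdu r u v * pdv r u v)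

/-- **A trapped sphere lies in the black hole region**: if `∂_v(Ω⁻²∂_v r) ≤ 0` (as for
any solution of the constraint `∂_v(Ω⁻²∂_v r) = −4πrT_vvΩ⁻²` with `T_vv ≥ 0`) and
`(ū,v̄)` is a trapped sphere (`2m/r > 1`) with `∂_u r(ū,v̄) < 0`, then `∂_v r(ū,v̄) < 0`,
the quantity `Ω⁻²∂_v r` stays below its (negative) value at `(ū,v̄)` along the outgoing
null ray, and `r` is strictly decreasing — in particular bounded above by `r(ū,v̄)` —
along `{u = ū, v ≥ v̄}`. -/
theorem trapped_sphere_in_black_hole_region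
    (Udom : Set (ℝ × ℝ)) (hopen : IsOpen Udom)
    (r Ω2 : ℝ → ℝ → ℝ)
    (hrpos : ∀ p ∈ Udom, 0 < r p.1 p.2) (hΩpos : ∀ p ∈ Udom, 0 < Ω2 p.1 p.2)
    (hrs : ContDiffOn ℝ (⊤ : ℕ∞) (fun p : ℝ × ℝ => r p.1 p.2) Udom)
    (hΩs : ContDiffOn ℝ (⊤ : ℕ∞) (fun p : ℝ × ℝ => Ω2 p.1 p.2) Udom)
    (hconc : ∀ p ∈ Udom,
      pdv (fun a b => (Ω2 a b)⁻¹ * pdv r a b) p.1 p.2 ≤ 0)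
    (ub vb : ℝ) (hmem : (ub, vb) ∈ Udom)
    (hdur : pdu r ub vb < 0)
    (htrap : 1 < 2 * hawk r Ω2 ub vb / r ub vb) :
    pdv r ub vb < 0 ∧
      (Ω2 ub vb)⁻¹ * pdv r ub vb < 0 ∧
      ∀ v₁ : ℝ, vb ≤ v₁ → (∀ v ∈ Icc vb v₁, (ub, v) ∈ Udom) →
        (∀ v ∈ Icc vb v₁,
          (Ω2 ub v)⁻¹ * pdv r ub v ≤ (Ω2 ub vb)⁻¹ * pdv r ub vb) ∧
        StrictAntiOn (fun v => r ub v) (Icc vb v₁) ∧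
        ∀ v ∈ Icc vb v₁, r ub v ≤ r ub vb := by
  -- slice set and slice functions
  set S : Set ℝ := {y | (ub, y) ∈ Udom} with hS
  have hSopen : IsOpen S := hopen.preimage (by continuity)
  have hline : ContDiff ℝ (⊤ : ℕ∞) (fun y : ℝ => ((ub, y) : ℝ × ℝ)) :=
    (contDiff_const.prodMk contDiff_id)
  have hfS : ContDiffOn ℝ (⊤ : ℕ∞) (fun y => r ub y) S := by
    have := hrs.comp hline.contDiffOn (fun y hy => hy)
    exact this
  have hΩS : ContDiffOn ℝ (⊤ : ℕ∞) (fun y => Ω2 ub y) S := by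
    have := hΩs.comp hline.contDiffOn (fun y hy => hy)
    exact this
  have hΩne : ∀ y ∈ S, Ω2 ub y ≠ 0 := fun y hy => (hΩpos _ hy).ne'
  have hf'S : ContDiffOn ℝ (⊤ : ℕ∞) (deriv (fun y => r ub y)) S :=
    hfS.deriv_of_isOpen hSopen (by simp)
  have hgS : ContDiffOn ℝ (⊤ : ℕ∞) (fun y => (Ω2 ub y)⁻¹ * pdv r ub y) S := by
    exact (hΩS.inv hΩne).mul hf'S
  -- first part: arithmetic
  have hA : 0 < (Ω2 ub vb)⁻¹ := inv_pos.2 (hΩpos _ hmem)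
  have hr0 : 0 < r ub vb := hrpos _ hmem
  have hpv : pdv r ub vb < 0 := by
    have h1 : r ub vb < 2 * hawk r Ω2 ub vb := (one_lt_div hr0).mp htrap
    unfold hawk at h1
    by_contra h
    push_neg at h
    nlinarith [mul_nonneg hA.le h, mul_nonneg (mul_nonneg hA.le h) (neg_pos.2 hdur).le]
  have hgneg : (Ω2 ub vb)⁻¹ * pdv r ub vb < 0 := mul_neg_of_pos_of_neg hA hpv
  refine ⟨hpv, hgneg, fun v₁ hv₁ hsub => ?_⟩
  have hIccS : Icc vb v₁ ⊆ S := fun v hv => hsub v hv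
  -- g antitone
  set g : ℝ → ℝ := fun y => (Ω2 ub y)⁻¹ * pdv r ub y with hg
  have hgdiff : ∀ y ∈ S, DifferentiableAt ℝ g y :=
    fun y hy => (hgS.differentiableOn (by simp)).differentiableAt (hSopen.mem_nhds hy)
  have hganti : AntitoneOn g (Icc vb v₁) := by
    apply antitoneOn_of_deriv_nonpos (convex_Icc vb v₁)
      ((hgS.continuousOn).mono hIccS)
      (fun y hy => (hgdiff y (hIccS (interior_subset hy))).differentiableWithinAt)
    intro y hy
    have hyU : (ub, y) ∈ Udom := hsub y (interior_subset hy)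
    have := hconc _ hyU
    simpa [pdv, hg] using this
  have hgle : ∀ v ∈ Icc vb v₁, g v ≤ g vb :=
    fun v hv => hganti (left_mem_Icc.2 hv₁) hv hv.1
  -- deriv of r along the ray is negative on the interval
  have hderneg : ∀ v ∈ Icc vb v₁, deriv (fun y => r ub y) v < 0 := by
    intro v hv
    have hΩv : 0 < Ω2 ub v := hΩpos _ (hsub v hv)
    have h1 : g v < 0 := lt_of_le_of_lt (hgle v hv) hgneg
    have h2 : pdv r ub v < 0 := by
      by_contra h
      push_neg at h
      exact absurd h1 (not_lt.2 (mul_nonneg (inv_pos.2 hΩv).le h))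
    simpa [pdv] using h2
  have hcont : ContinuousOn (fun v => r ub v) (Icc vb v₁) :=
    (hfS.continuousOn).mono hIccS
  have hstrict : StrictAntiOn (fun v => r ub v) (Icc vb v₁) := by
    apply strictAntiOn_of_deriv_neg (convex_Icc vb v₁) hcont
    intro y hy
    exact hderneg y (interior_subset hy)
  refine ⟨fun v hv => hgle v hv, hstrict, fun v hv => ?_⟩
  rcases eq_or_lt_of_le hv.1 with h | h
  · simp [← h]
  · exact (hstrict (left_mem_Icc.2 hv₁) hv h).le

end
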